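/- Let R = R₁ × ⋯ × R_N with symmetric relations τᵢ on Rᵢ^# and τ_× on R^# defined coordinatewise on non-unit coordinates. A non-unit (a₁,…,a_N) ∈ R is τ_×-atomic (τ_×-irreducible) if and only if there is an index i₀ such that a_{i₀} is τ_{i₀}-atomic in R_{i₀} and aᵢ ∈ U(Rᵢ) for all i ≠ i₀. -/

import Mathlib

/-- `x` is a nonzero nonunit, i.e. an element of `R^#`. -/
def NNU {R : Type*} [CommRing R] (x : R) : Prop := x ≠ 0 ∧ ¬ IsUnit x

/-- `R` is présimplifiable: `x = x*y` implies `x = 0` or `y` is a unit. -/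
def Presimplifiable (R : Type*) [CommRing R] : Prop :=
  ∀ x y : R, x = x * y → x = 0 ∨ IsUnit y

/-- `R` is a strongly associate ring: `(a) = (b)` implies `a = u*b` for some unit `u`. -/
def StronglyAssociateRing (R : Type*) [CommRing R] : Prop :=
  ∀ a b : R, Ideal.span ({a} : Set R) = Ideal.span {b} → ∃ u : R, IsUnit u ∧ a = u * b

variable {R : Type*} [CommRing R]

/-- `a = u * ines.prod * ess.prod` is a U-factorization: the members of `ines`
(the inessential divisors) and `ess` (the essential divisors) are nonzero nonunits,
each inessential divisor `x` satisfies `(x * ess.prod) = (ess.prod)`, and omitting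
any essential divisor changes the ideal generated by the product of the essential
divisors. -/
def IsUFact (a u : R) (ines ess : List R) : Prop :=
  IsUnit u ∧ (∀ x ∈ ines, NNU x) ∧ (∀ x ∈ ess, NNU x) ∧
    a = u * ines.prod * ess.prod ∧
    (∀ x ∈ ines, Ideal.span ({x * ess.prod} : Set R) = Ideal.span ({ess.prod} : Set R)) ∧
    (∀ j < ess.length,
      Ideal.span ({ess.prod} : Set R) ≠ Ideal.span ({(ess.eraseIdx j).prod} : Set R))

/-- `a = u * l.prod` is a τ-factorization: `u` is a unit, the factors are nonzero
nonunits, and distinct factors are τ-related. -/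
def IsTauFact (τ : R → R → Prop) (a u : R) (l : List R) : Prop :=
  IsUnit u ∧ (∀ x ∈ l, NNU x) ∧ a = u * l.prod ∧ l.Pairwise τ

/-- A τ-U-factorization: a U-factorization whose underlying factorization is a
τ-factorization. -/
def IsTauUFact (τ : R → R → Prop) (a u : R) (ines ess : List R) : Prop :=
  IsUFact a u ines ess ∧ (ines ++ ess).Pairwise τ

/-- `a` is τ-irreducible: `a` is a nonunit and every τ-factorization of `a`
contains a factor generating the same principal ideal as `a`. -/
def TauIrred (τ : R → R → Prop) (a : R) : Prop :=
  ¬ IsUnit a ∧ ∀ u l, IsTauFact τ a u l →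
    ∃ b ∈ l, Ideal.span ({a} : Set R) = Ideal.span ({b} : Set R)

/-- `b` τ-divides `a`: `b` occurs as a factor in some τ-factorization of `a`. -/
def TauDivides (τ : R → R → Prop) (b a : R) : Prop :=
  ∃ u l, IsTauFact τ a u l ∧ b ∈ l

/-- `b` is an essential divisor in some τ-U-factorization of `a`. -/
def IsEssTauUDivisor (τ : R → R → Prop) (b a : R) : Prop :=
  ∃ u ines ess, IsTauUFact τ a u ines ess ∧ b ∈ ess

/-- `R` is a τ-BFR: every nonunit has a bound on the number of factors in any
τ-factorization. -/
def TauBFR (τ : R → R → Prop) : Prop :=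
  ∀ a : R, ¬ IsUnit a → ∃ N : ℕ, ∀ u l, IsTauFact τ a u l → l.length ≤ N

/-- `R` is a τ-U-BFR: every nonunit has a bound on the number of essential
divisors in any τ-U-factorization. -/
def TauUBFR (τ : R → R → Prop) : Prop :=
  ∀ a : R, ¬ IsUnit a → ∃ N : ℕ, ∀ u ines ess, IsTauUFact τ a u ines ess → ess.length ≤ N

/-- `R` is τ-présimplifiable: the only τ-factorizations of `x` containing `x`
as a factor are the trivial ones `x = λ * x`. -/
def TauPresimplifiable (τ : R → R → Prop) : Prop :=
  ∀ (x u : R) (l : List R), IsTauFact τ x u l → x ∈ l → l = [x]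

/-- `R` is τ-U-présimplifiable: every τ-U-factorization of every nonzero
nonunit has no nonunit inessential divisors. -/
def TauUPresimplifiable (τ : R → R → Prop) : Prop :=
  ∀ a : R, a ≠ 0 → ¬ IsUnit a →
    ∀ u ines ess, IsTauUFact τ a u ines ess → ∀ x ∈ ines, IsUnit x

/-- τ is refinable: replacing a factor of a τ-factorization by one of its own
τ-factorizations again yields a τ-factorization. -/
def TauRefinable (τ : R → R → Prop) : Prop :=
  ∀ (a u b u' : R) (l₁ l₂ m : List R),
    IsTauFact τ a u (l₁ ++ b :: l₂) → IsTauFact τ b u' m →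
      IsTauFact τ a (u * u') (l₁ ++ m ++ l₂)

/-- `R` is τ-U-refinable: refining an essential divisor of a τ-U-factorization by
one of its own τ-U-factorizations again yields a τ-U-factorization. -/
def TauURefinable (τ : R → R → Prop) : Prop :=
  ∀ (a u b u' : R) (ines ines' ess' e₁ e₂ : List R),
    IsTauUFact τ a u ines (e₁ ++ b :: e₂) → IsTauUFact τ b u' ines' ess' →
      IsTauUFact τ a (u * u') (ines ++ ines') (e₁ ++ ess' ++ e₂)

/-- `R` satisfies τ-ACCP. -/
def TauACCP (τ : R → R → Prop) : Prop :=
  ¬ ∃ c : ℕ → R, (∀ i, Ideal.span ({c i} : Set R) < Ideal.span ({c (i + 1)} : Set R)) ∧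
      ∀ i, TauDivides τ (c (i + 1)) (c i)

/-- `R` satisfies τ-U-ACCP. -/
def TauUACCP (τ : R → R → Prop) : Prop :=
  ¬ ∃ c : ℕ → R, (∀ i, Ideal.span ({c i} : Set R) < Ideal.span ({c (i + 1)} : Set R)) ∧
      ∀ i, IsEssTauUDivisor τ (c (i + 1)) (c i)

/-- `a ≅ b`: very strong associates. -/
def VSAssoc (a b : R) : Prop :=
  Ideal.span ({a} : Set R) = Ideal.span ({b} : Set R) ∧
    ((a = 0 ∧ b = 0) ∨ ∀ r : R, a = r * b → IsUnit r)

/-- `a` is τ-very strongly atomic: `a ≅ a`, `a` is a nonunit, and every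
τ-factorization of `a` is trivial. -/
def TauVSAtomic (τ : R → R → Prop) (a : R) : Prop :=
  ¬ IsUnit a ∧ VSAssoc a a ∧ ∀ u l, IsTauFact τ a u l → l.length = 1

/-- Two lists agree up to rearrangement and associates. -/
def AssocPerm (l l' : List R) : Prop :=
  ∃ l'' : List R, l'.Perm l'' ∧
    List.Forall₂ (fun x y => Ideal.span ({x} : Set R) = Ideal.span ({y} : Set R)) l l''

/-- The product relation `τ_×` on a product of rings: coordinates are related
whenever both are nonunits. -/
def TauX {ι : Type*} {S : ι → Type*} [∀ i, CommRing (S i)]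
    (τ : ∀ i, S i → S i → Prop) (a b : ∀ i, S i) : Prop :=
  ∀ i, ¬ IsUnit (a i) → ¬ IsUnit (b i) → τ i (a i) (b i)


/-- A nonunit of a finite product of rings is τ_×-atomic iff some coordinate is
τᵢ-atomic and all other coordinates are units. -/

private lemma span_eq_span_iff' {A : Type*} [CommRing A] {a b : A} :
    Ideal.span ({a} : Set A) = Ideal.span {b} ↔ a ∣ b ∧ b ∣ a := by
  rw [le_antisymm_iff, Ideal.span_singleton_le_span_singleton,
    Ideal.span_singleton_le_span_singleton]
  tauto

private lemma dvd_apply' {N : ℕ} {S : Fin N → Type*} [∀ i, CommRing (S i)]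
    {a b : ∀ i, S i} (h : a ∣ b) (i : Fin N) : a i ∣ b i := by
  obtain ⟨c, rfl⟩ := h; exact ⟨c i, rfl⟩

private lemma pi_dvd_of_forall' {N : ℕ} {S : Fin N → Type*} [∀ i, CommRing (S i)]
    {a b : ∀ i, S i} (h : ∀ i, a i ∣ b i) : a ∣ b := by
  choose c hc using h
  exact ⟨c, funext hc⟩

private lemma pi_isUnit_iff' {N : ℕ} {S : Fin N → Type*} [∀ i, CommRing (S i)]
    {a : ∀ i, S i} : IsUnit a ↔ ∀ i, IsUnit (a i) := by
  constructor
  · intro h i; exact h.map (Pi.evalRingHom S i)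
  · intro h
    choose b hb using h
    refine IsUnit.of_mul_eq_one (a := a) (fun i => ((b i)⁻¹ : (S i)ˣ)) ?_
    funext i
    simp [← hb i]


theorem stmt17 {N : ℕ} {S : Fin N → Type*} [∀ i, CommRing (S i)]
    (τ : ∀ i, S i → S i → Prop) (hsym : ∀ i, Symmetric (τ i))
    (hsub : ∀ i, ∀ x y : S i, τ i x y → NNU x ∧ NNU y)
    (a : ∀ i, S i) (ha : ¬ IsUnit a) :
    TauIrred (TauX τ) a ↔
      ∃ i₀ : Fin N, TauIrred (τ i₀) (a i₀) ∧ ∀ i, i ≠ i₀ → IsUnit (a i) := by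
  classical
  constructor
  · rintro ⟨-, hirr⟩
    have hne : ∃ i₀, ¬ IsUnit (a i₀) := by
      by_contra h; push_neg at h
      exact ha (pi_isUnit_iff'.mpr fun i => h i)
    obtain ⟨i₀, hi₀⟩ := hne
    have hnt : Nontrivial (S i₀) := by
      by_contra h
      rw [not_nontrivial_iff_subsingleton] at h
      exact hi₀ (isUnit_of_subsingleton _)
    have huniq : ∀ j, j ≠ i₀ → IsUnit (a j) := by
      intro j hj
      by_contra hja
      have hntj : Nontrivial (S j) := by
        by_contra h
        rw [not_nontrivial_iff_subsingleton] at h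
        exact hja (isUnit_of_subsingleton _)
      set x : ∀ i, S i := Function.update 1 i₀ (a i₀) with hx
      set y : ∀ i, S i := Function.update a i₀ 1 with hy
      have hxi : ∀ i, i ≠ i₀ → x i = 1 := fun i hi => Function.update_of_ne hi _ _
      have hyi : ∀ i, i ≠ i₀ → y i = a i := fun i hi => Function.update_of_ne hi _ _
      have hxy : a = 1 * [x, y].prod := by
        funext i
        simp only [List.prod_cons, List.prod_nil, one_mul, mul_one, Pi.mul_apply,
          Pi.one_apply]
        by_cases h : i = i₀
        · subst h; simp [hx, hy]
        · rw [hxi i h, hyi i h, one_mul]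
      have hfact : IsTauFact (TauX τ) a 1 [x, y] := by
        refine ⟨isUnit_one, ?_, hxy, ?_⟩
        · intro z hz
          simp only [List.mem_cons, List.not_mem_nil, or_false] at hz
          rcases hz with rfl | rfl
          · constructor
            · intro h0
              have := congrFun h0 j
              rw [hxi j hj] at this
              exact one_ne_zero this
            · intro hux
              have := pi_isUnit_iff'.mp hux i₀
              rw [hx] at this
              simp at this
              exact hi₀ this
          · constructor
            · intro h0
              have := congrFun h0 i₀
              rw [hy] at this
              simp at this
            · intro huy
              have := pi_isUnit_iff'.mp huy j
              rw [hyi j hj] at this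
              exact hja this
        · refine List.Pairwise.cons ?_ (List.pairwise_singleton _ _)
          intro z hz
          simp only [List.mem_singleton] at hz
          subst hz
          intro i h1 h2
          by_cases h : i = i₀
          · subst h
            exfalso; apply h2
            rw [hy]; simp
          · exfalso; apply h1
            rw [hxi i h]; exact isUnit_one
      obtain ⟨b, hb, hspan⟩ := hirr 1 [x, y] hfact
      simp only [List.mem_cons, List.not_mem_nil, or_false] at hb
      rcases hb with rfl | rfl
      · have := (span_eq_span_iff'.mp hspan).1
        have hdj := dvd_apply' this j
        rw [hxi j hj] at hdj
        exact hja (isUnit_of_dvd_one hdj)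
      · have := (span_eq_span_iff'.mp hspan).1
        have hdi := dvd_apply' this i₀
        rw [hy] at hdi
        simp only [Function.update_self] at hdi
        exact hi₀ (isUnit_of_dvd_one hdi)
    refine ⟨i₀, ⟨hi₀, ?_⟩, huniq⟩
    intro u₀ m hm
    obtain ⟨hu₀, hnnu, hprod, hpw⟩ := hm
    set lift : S i₀ → (∀ i, S i) := fun c => Function.update 1 i₀ c with hlift
    set L : List (∀ i, S i) := m.map lift with hL
    set U : ∀ i, S i := Function.update a i₀ u₀ with hUdef
    have hliftval : ∀ c, lift c i₀ = c := fun c => Function.update_self _ _ _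
    have hliftother : ∀ c i, i ≠ i₀ → lift c i = 1 :=
      fun c i hi => Function.update_of_ne hi _ _
    have hfact : IsTauFact (TauX τ) a U L := by
      refine ⟨?_, ?_, ?_, ?_⟩
      · refine pi_isUnit_iff'.mpr fun i => ?_
        by_cases h : i = i₀
        · subst h; rw [hUdef]; simpa using hu₀
        · rw [hUdef, Function.update_of_ne h]; exact huniq i h
      · intro z hz
        obtain ⟨c, hc, rfl⟩ := List.mem_map.mp hz
        obtain ⟨hc0, hcu⟩ := hnnu c hc
        constructor
        · intro h0
          have := congrFun h0 i₀
          rw [hliftval c] at this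
          exact hc0 this
        · intro hz
          have := pi_isUnit_iff'.mp hz i₀
          rw [hliftval c] at this
          exact hcu this
      · funext i
        rw [Pi.mul_apply, Pi.list_prod_apply]
        by_cases h : i = i₀
        · rw [h]
          have hmapm : L.map (fun f => f i₀) = m := by
            rw [hL, List.map_map]
            have : ((fun f : ∀ i, S i => f i₀) ∘ lift) = id := by
              funext c; exact hliftval c
            rw [this, List.map_id]
          rw [hmapm, hUdef, Function.update_self]
          exact hprod
        · have : ∀ z ∈ L.map (fun f => f i), z = 1 := by
            intro z hz
            obtain ⟨f, hf, rfl⟩ := List.mem_map.mp hz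
            obtain ⟨c, hc, rfl⟩ := List.mem_map.mp hf
            exact hliftother c i h
          rw [List.prod_eq_one this, hUdef, Function.update_of_ne h, mul_one]
      · rw [hL, List.pairwise_map]
        refine hpw.imp ?_
        intro c d hcd i h1 h2
        by_cases h : i = i₀
        · subst h; rw [hliftval, hliftval]; exact hcd
        · exfalso; apply h1; rw [hliftother c i h]; exact isUnit_one
    obtain ⟨b, hb, hspan⟩ := hirr U L hfact
    obtain ⟨c, hc, rfl⟩ := List.mem_map.mp hb
    refine ⟨c, hc, ?_⟩
    obtain ⟨h1, h2⟩ := span_eq_span_iff'.mp hspan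
    have d1 := dvd_apply' h1 i₀
    have d2 := dvd_apply' h2 i₀
    rw [hliftval] at d1 d2
    exact span_eq_span_iff'.mpr ⟨d1, d2⟩
  · rintro ⟨i₀, ⟨hai₀, hirr⟩, hU⟩
    refine ⟨ha, ?_⟩
    rintro u l ⟨hu, hnnu, hprod, hpw⟩
    have hcoordunit : ∀ x ∈ l, ∀ j, j ≠ i₀ → IsUnit (x j) := by
      intro x hx j hj
      have hdvd : x ∣ a := hprod ▸ Dvd.dvd.mul_left (List.dvd_prod hx) u
      exact isUnit_of_dvd_unit (dvd_apply' hdvd j) (hU j hj)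
    have hx0 : ∀ x ∈ l, ¬ IsUnit (x i₀) := by
      intro x hx hux
      refine (hnnu x hx).2 (pi_isUnit_iff'.mpr fun i => ?_)
      by_cases h : i = i₀
      · exact h ▸ hux
      · exact hcoordunit x hx i h
    match l, hnnu, hprod, hpw, hx0, hcoordunit with
    | [], hnnu, hprod, hpw, hx0, hcu =>
      exfalso
      apply ha
      rw [hprod]
      simpa using hu
    | [x], hnnu, hprod, hpw, hx0, hcu =>
      refine ⟨x, List.mem_singleton_self x, span_eq_span_iff'.mpr ⟨?_, ?_⟩⟩
      · obtain ⟨v, rfl⟩ := hu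
        refine ⟨(v⁻¹ : _ˣ), ?_⟩
        rw [hprod]
        simp [mul_comm, mul_assoc, mul_left_comm]
      · exact ⟨u, by rw [hprod]; simp [mul_comm]⟩
    | p :: q :: t, hnnu, hprod, hpw, hx0, hcu =>
      have hNNUc : ∀ x ∈ p :: q :: t, NNU (x i₀) := by
        intro x hx
        have hpq : TauX τ p q := (List.pairwise_cons.mp hpw).1 q (List.mem_cons_self)
        rcases List.mem_cons.mp hx with rfl | hx'
        · exact (hsub i₀ _ _ (hpq i₀ (hx0 x hx) (hx0 q (by simp)))).1
        · have hpx : TauX τ p x := (List.pairwise_cons.mp hpw).1 x hx'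
          exact (hsub i₀ _ _ (hpx i₀ (hx0 p (by simp)) (hx0 x hx))).2
      have hfact : IsTauFact (τ i₀) (a i₀) (u i₀) ((p :: q :: t).map (fun f => f i₀)) := by
        refine ⟨pi_isUnit_iff'.mp hu i₀, ?_, ?_, ?_⟩
        · intro z hz
          obtain ⟨f, hf, rfl⟩ := List.mem_map.mp hz
          exact hNNUc f hf
        · have := congrFun hprod i₀
          rw [Pi.mul_apply, Pi.list_prod_apply] at this
          exact this
        · rw [List.pairwise_map]
          refine hpw.imp_of_mem ?_
          intro x y hx hy hxy
          exact hxy i₀ (hx0 x hx) (hx0 y hy)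
      obtain ⟨b, hb, hspan⟩ := hirr (u i₀) _ hfact
      obtain ⟨x, hx, rfl⟩ := List.mem_map.mp hb
      refine ⟨x, hx, span_eq_span_iff'.mpr ⟨?_, ?_⟩⟩
      · refine pi_dvd_of_forall' fun i => ?_
        by_cases h : i = i₀
        · subst h; exact (span_eq_span_iff'.mp hspan).1
        · exact (hU i h).dvd
      · refine pi_dvd_of_forall' fun i => ?_
        by_cases h : i = i₀
        · subst h; exact (span_eq_span_iff'.mp hspan).2
        · exact (hcu x hx i h).dvd
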